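/- arXiv:1710.00225 — 2 statements merged into one kernel-verified Lean document; each statement's English description precedes it below -/
import Mathlib

section
/- Let η be an algebraic integer all of whose conjugates in ℂ have complex absolute value 1. Then η is a root of unity. -/
/-- Kronecker's theorem: an algebraic integer `η ∈ ℂ` all of whose conjugates
(i.e. all roots in `ℂ` of its minimal polynomial over `ℚ`) have complex absolute
value `1` is a root of unity. -/
theorem kronecker_root_of_unity (η : ℂ) (hint : IsIntegral ℤ η)
    (hconj : ∀ ξ : ℂ, Polynomial.aeval ξ (minpoly ℚ η) = 0 → ‖ξ‖ = 1) :
    ∃ n : ℕ, 0 < n ∧ η ^ n = 1 := by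
  have halg : IsIntegral ℚ η := hint.tower_top
  let K := IntermediateField.adjoin ℚ {η}
  haveI : FiniteDimensional ℚ K := IntermediateField.adjoin.finiteDimensional halg
  haveI : NumberField K := ⟨⟩
  set x : K := IntermediateField.AdjoinSimple.gen ℚ η with hx
  have hxη : (algebraMap K ℂ) x = η := rfl
  have hmin : minpoly ℚ η = minpoly ℚ x := by
    rw [← hxη, minpoly.algebraMap_eq (algebraMap K ℂ).injective]
  have hxi : IsIntegral ℤ x := by
    rw [← isIntegral_algebraMap_iff (algebraMap K ℂ).injective, hxη]; exact hint
  have hnorm : ∀ φ : K →+* ℂ, ‖φ x‖ = 1 := by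
    intro φ
    have : Polynomial.aeval (φ x) (minpoly ℚ η) = 0 := by
      rw [hmin]
      exact (Polynomial.aeval_algHom_apply φ.toRatAlgHom x (minpoly ℚ x)).symm ▸ by rw [minpoly.aeval, map_zero]
    exact hconj (φ x) this
  obtain ⟨n, hn, h⟩ := NumberField.Embeddings.pow_eq_one_of_norm_eq_one K ℂ hxi hnorm
  exact ⟨n, hn, by rw [← hxη, ← map_pow, h, map_one]⟩
end

section
/- Let p = 2 and let E_p/F_q be a quadratic extension of 2-adic fields with Galois involution c. Suppose d ∈ F_q^× satisfies Tr_{F_q/ℚ_2}(d·Nm_{E_p/F_q}(x)) ∈ ℤ_2 for all x ∈ O_{E_p}, and that E_p/F_q is totally ramified. Then Tr_{F_q/ℚ_2}(d·x) ∈ ℤ_2 for all x ∈ O_{F_q}. -/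
open IsLocalRing

lemma aux_two_not_unit (K O : Type*) [Field K] [CommRing O] [Algebra O K]
    [Algebra ℤ_[2] O] [Algebra ℤ_[2] K] [Algebra ℚ_[2] K]
    [IsScalarTower ℤ_[2] O K] [IsScalarTower ℤ_[2] ℚ_[2] K]
    [IsIntegralClosure O ℤ_[2] K] : ¬ IsUnit (2 : O) := by
  rintro ⟨u, hu⟩
  have hint : IsIntegral ℤ_[2] (algebraMap O K ((u⁻¹ : Oˣ) : O)) :=
    IsIntegralClosure.isIntegral_iff.mpr ⟨_, rfl⟩
  have hprod : algebraMap O K ((u : O)) * algebraMap O K ((u⁻¹ : Oˣ) : O) = 1 := by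
    rw [← map_mul, Units.mul_inv, map_one]
  rw [hu] at hprod
  have h2K : algebraMap O K (2 : O) = algebraMap ℚ_[2] K (2 : ℚ_[2]) := by
    rw [map_ofNat, map_ofNat]
  rw [h2K] at hprod
  have heq : algebraMap O K ((u⁻¹ : Oˣ) : O) = algebraMap ℚ_[2] K ((2 : ℚ_[2])⁻¹) := by
    rw [map_inv₀]
    exact eq_inv_of_mul_eq_one_right hprod
  rw [heq, isIntegral_algebraMap_iff ((algebraMap ℚ_[2] K).injective)] at hint
  obtain ⟨z, hz⟩ := IsIntegrallyClosed.isIntegral_iff.mp hint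
  have h21 : (2 : ℤ_[2]) * z = 1 := by
    apply IsFractionRing.injective ℤ_[2] ℚ_[2]
    rw [map_mul, map_ofNat, hz, map_one, mul_inv_cancel₀ (two_ne_zero)]
  have : IsUnit ((2 : ℕ) : ℤ_[2]) := by
    rw [Nat.cast_ofNat]
    exact IsUnit.of_mul_eq_one _ h21
  exact (PadicInt.irreducible_p (p := 2)).not_isUnit this

/-- Let `E/F` be a totally ramified quadratic extension of `2`-adic fields with rings
of integers `O_F`, `O_E`.  Suppose `d ∈ F^×` satisfies
`Tr_{F/ℚ₂}(d · Nm_{E/F}(x)) ∈ ℤ₂` for all `x ∈ O_E`.  Then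
`Tr_{F/ℚ₂}(d · y) ∈ ℤ₂` for all `y ∈ O_F`. -/
theorem trace_integral_of_trace_norm_integral
    (F E : Type*) [Field F] [Field E]
    [Algebra ℚ_[2] F] [FiniteDimensional ℚ_[2] F]
    [Algebra ℚ_[2] E] [Algebra F E] [IsScalarTower ℚ_[2] F E]
    (O_F O_E : Type*) [CommRing O_F] [CommRing O_E]
    [Algebra O_F F] [IsFractionRing O_F F]
    [Algebra O_E E] [IsFractionRing O_E E]
    [Algebra ℤ_[2] O_F] [Algebra ℤ_[2] F] [IsScalarTower ℤ_[2] O_F F]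
    [IsScalarTower ℤ_[2] ℚ_[2] F] [IsIntegralClosure O_F ℤ_[2] F]
    [Algebra ℤ_[2] O_E] [Algebra ℤ_[2] E] [IsScalarTower ℤ_[2] O_E E]
    [IsScalarTower ℤ_[2] ℚ_[2] E] [IsIntegralClosure O_E ℤ_[2] E]
    [Algebra O_F O_E] [Algebra O_F E] [IsScalarTower O_F O_E E] [IsScalarTower O_F F E]
    [IsLocalRing O_F] [IsLocalRing O_E]
    (hquad : Module.finrank F E = 2)
    (htot : Ideal.ramificationIdx'
        (IsLocalRing.maximalIdeal O_F) (IsLocalRing.maximalIdeal O_E) = 2)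
    (d : F) (hd : d ≠ 0)
    (htr : ∀ x : O_E, ∃ z : ℤ_[2], algebraMap ℤ_[2] ℚ_[2] z =
        Algebra.trace ℚ_[2] F (d * Algebra.norm F (algebraMap O_E E x))) :
    ∀ y : O_F, ∃ z : ℤ_[2], algebraMap ℤ_[2] ℚ_[2] z =
      Algebra.trace ℚ_[2] F (d * algebraMap O_F F y) := by
  classical
  have hinjF : Function.Injective (algebraMap O_F F) := IsFractionRing.injective O_F F
  have hinjE : Function.Injective (algebraMap O_E E) := IsFractionRing.injective O_E E
  haveI : IsDomain O_F := Function.Injective.isDomain _ hinjF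
  haveI : IsDomain O_E := Function.Injective.isDomain _ hinjE
  haveI : CharZero F := charZero_of_injective_algebraMap (algebraMap ℚ_[2] F).injective
  haveI : CharZero E := charZero_of_injective_algebraMap (algebraMap ℚ_[2] E).injective
  haveI : IsScalarTower ℤ_[2] F E := IsScalarTower.of_algebraMap_eq fun x => by
    rw [IsScalarTower.algebraMap_apply ℤ_[2] ℚ_[2] E, IsScalarTower.algebraMap_apply ℚ_[2] F E,
      ← IsScalarTower.algebraMap_apply ℤ_[2] ℚ_[2] F]
  haveI : FiniteDimensional F E := FiniteDimensional.of_finrank_eq_succ hquad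
  haveI : FiniteDimensional ℚ_[2] E := FiniteDimensional.trans ℚ_[2] F E
  haveI : IsDedekindDomain O_F := IsIntegralClosure.isDedekindDomain ℤ_[2] ℚ_[2] F O_F
  haveI : IsDedekindDomain O_E := IsIntegralClosure.isDedekindDomain ℤ_[2] ℚ_[2] E O_E
  haveI : Module.Finite ℤ_[2] O_F := IsIntegralClosure.finite ℤ_[2] ℚ_[2] F O_F
  have h2F : ¬ IsUnit (2 : O_F) := aux_two_not_unit F O_F
  have h2E : ¬ IsUnit (2 : O_E) := aux_two_not_unit E O_E
  have h20F : (2 : O_F) ≠ 0 := by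
    intro h
    have : (2 : F) = 0 := by rw [← map_ofNat (algebraMap O_F F) 2, h, map_zero]
    exact two_ne_zero this
  have hnfF : ¬ IsField O_F := by
    intro h
    obtain ⟨b, hb⟩ := h.mul_inv_cancel h20F
    exact h2F (IsUnit.of_mul_eq_one _ hb)
  have hnfE : ¬ IsField O_E := by
    intro h
    have h20E : (2 : O_E) ≠ 0 := by
      intro hh
      have : (2 : E) = 0 := by rw [← map_ofNat (algebraMap O_E E) 2, hh, map_zero]
      exact two_ne_zero this
    obtain ⟨b, hb⟩ := h.mul_inv_cancel h20E
    exact h2E (IsUnit.of_mul_eq_one _ hb)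
  haveI : IsDiscreteValuationRing O_F :=
    ((IsDiscreteValuationRing.TFAE O_F hnfF).out 0 2).mpr (inferInstance : IsDedekindDomain O_F)
  haveI : IsDiscreteValuationRing O_E :=
    ((IsDiscreteValuationRing.TFAE O_E hnfE).out 0 2).mpr (inferInstance : IsDedekindDomain O_E)
  -- the norm of an integral element is integral
  have hNint : ∀ x : O_E, IsIntegral ℤ_[2] (Algebra.norm F (algebraMap O_E E x)) := fun x =>
    Algebra.isIntegral_norm F (IsIntegralClosure.isIntegral_iff.mpr ⟨x, rfl⟩)
  have hnm0 : ∀ x : O_E, ∃ w : O_F, algebraMap O_F F w = Algebra.norm F (algebraMap O_E E x) :=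
    fun x => IsIntegralClosure.isIntegral_iff.mp (hNint x)
  choose nm hnm using hnm0
  have hEmap : ∀ v : O_F,
      algebraMap O_E E (algebraMap O_F O_E v) = algebraMap F E (algebraMap O_F F v) := fun v => by
    rw [← IsScalarTower.algebraMap_apply, ← IsScalarTower.algebraMap_apply]
  have hnm_sq : ∀ v : O_F, nm (algebraMap O_F O_E v) = v ^ 2 := fun v => by
    apply hinjF
    rw [hnm, hEmap, Algebra.norm_algebraMap, hquad, map_pow]
  have hnm_mul : ∀ x y : O_E, nm (x * y) = nm x * nm y := fun x y => by
    apply hinjF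
    rw [map_mul, hnm, hnm, hnm, map_mul, map_mul]
  have hnm_one : nm 1 = 1 := by
    apply hinjF
    rw [hnm, map_one, map_one, map_one]
  have hnm_pow : ∀ (x : O_E) (n : ℕ), nm (x ^ n) = nm x ^ n := fun x n => by
    induction n with
    | zero => rw [pow_zero, pow_zero, hnm_one]
    | succ n ih => rw [pow_succ, pow_succ, hnm_mul, ih]
  -- uniformizers
  obtain ⟨ϖE, hϖE⟩ := IsDiscreteValuationRing.exists_irreducible O_E
  obtain ⟨ϖF, hϖF⟩ := IsDiscreteValuationRing.exists_irreducible O_F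
  have hinjFE : Function.Injective (algebraMap O_F E) := by
    rw [IsScalarTower.algebraMap_eq O_F F E, RingHom.coe_comp]
    exact (algebraMap F E).injective.comp hinjF
  have hinjOFE : Function.Injective (algebraMap O_F O_E) := by
    have h := hinjFE
    rw [IsScalarTower.algebraMap_eq O_F O_E E, RingHom.coe_comp] at h
    exact Function.Injective.of_comp h
  have hmap2 : Ideal.map (algebraMap O_F O_E) (maximalIdeal O_F) ≤ maximalIdeal O_E ^ 2 := by
    rw [← htot]; exact Ideal.le_pow_ramificationIdx'
  have hϖFmemF : ϖF ∈ maximalIdeal O_F := by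
    rw [hϖF.maximalIdeal_eq]; exact Ideal.mem_span_singleton_self ϖF
  have hϖFmem : algebraMap O_F O_E ϖF ∈ maximalIdeal O_E ^ 2 :=
    hmap2 (Ideal.mem_map_of_mem _ hϖFmemF)
  obtain ⟨c, hc⟩ : ϖE ^ 2 ∣ algebraMap O_F O_E ϖF := by
    rw [← Ideal.mem_span_singleton, ← Ideal.span_singleton_pow, ← hϖE.maximalIdeal_eq]
    exact hϖFmem
  have hϖF0 : algebraMap O_F O_E ϖF ≠ 0 := fun h =>
    hϖF.ne_zero (hinjOFE (by rw [h, map_zero]))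
  have hcu : IsUnit c := by
    by_contra hcu
    have hc3 : algebraMap O_F O_E ϖF ∈ maximalIdeal O_E ^ 3 := by
      rw [hϖE.maximalIdeal_eq, Ideal.span_singleton_pow, Ideal.mem_span_singleton]
      obtain ⟨t, ht⟩ : ϖE ∣ c := by
        rw [← Ideal.mem_span_singleton, ← hϖE.maximalIdeal_eq]
        exact hcu
      exact ⟨t, by rw [hc, ht]; ring⟩
    have hmap3 : Ideal.map (algebraMap O_F O_E) (maximalIdeal O_F) ≤ maximalIdeal O_E ^ 3 := by
      rw [hϖF.maximalIdeal_eq, Ideal.map_span, Set.image_singleton]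
      exact Ideal.span_le.mpr (Set.singleton_subset_iff.mpr hc3)
    obtain ⟨n, u, hun⟩ := IsDiscreteValuationRing.eq_unit_mul_pow_irreducible hϖF0 hϖE
    have hbdd : BddAbove {k : ℕ |
        Ideal.map (algebraMap O_F O_E) (maximalIdeal O_F) ≤ maximalIdeal O_E ^ k} := by
      refine ⟨n, fun k hk => ?_⟩
      by_contra hnk
      push_neg at hnk
      have hmem : algebraMap O_F O_E ϖF ∈ maximalIdeal O_E ^ (n + 1) :=
        (Ideal.pow_le_pow_right hnk) (hk (Ideal.mem_map_of_mem _ hϖFmemF))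
      rw [hϖE.maximalIdeal_eq, Ideal.span_singleton_pow, Ideal.mem_span_singleton, hun]
        at hmem
      obtain ⟨t, ht⟩ := hmem
      have hcan : (u : O_E) = ϖE * t := by
        have h2 : (u : O_E) * ϖE ^ n = (ϖE * t) * ϖE ^ n := by
          rw [ht]; ring
        exact mul_right_cancel₀ (pow_ne_zero n hϖE.ne_zero) h2
      have : IsUnit (ϖE * t) := hcan ▸ u.isUnit
      exact hϖE.not_isUnit (isUnit_of_mul_isUnit_left this)
    have h3 : (3 : ℕ) ≤ Ideal.ramificationIdx'
        (maximalIdeal O_F) (maximalIdeal O_E) := le_csSup hbdd hmap3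
    omega
  -- π := nm ϖE is irreducible in O_F
  set π : O_F := nm ϖE with hπdef
  obtain ⟨w, hw⟩ : IsUnit (nm c) := by
    obtain ⟨cu, rfl⟩ := hcu
    refine IsUnit.of_mul_eq_one (nm ((cu⁻¹ : O_Eˣ) : O_E)) ?_
    rw [← hnm_mul, Units.mul_inv, hnm_one]
  have hπ2 : π ^ 2 * nm c = ϖF ^ 2 := by
    rw [hπdef, ← hnm_pow, ← hnm_mul, ← hc, hnm_sq]
  have hπ0 : π ≠ 0 := by
    intro h
    rw [h] at hπ2
    rw [zero_pow (by norm_num : (2:ℕ) ≠ 0), zero_mul] at hπ2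
    exact pow_ne_zero 2 hϖF.ne_zero hπ2.symm
  obtain ⟨m, v, hv⟩ := IsDiscreteValuationRing.eq_unit_mul_pow_irreducible hπ0 hϖF
  have h2m : 2 * m = 2 := by
    refine IsDiscreteValuationRing.unit_mul_pow_congr_pow hϖF hϖF (w * v ^ 2) 1 (2 * m) 2 ?_
    rw [hv] at hπ2
    rw [Units.val_mul, Units.val_pow_eq_pow_val, Units.val_one, one_mul]
    calc (w : O_F) * (v : O_F) ^ 2 * ϖF ^ (2 * m)
        = ((v : O_F) * ϖF ^ m) ^ 2 * (w : O_F) := by ring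
      _ = ϖF ^ 2 := by rw [hw]; exact hπ2
  have hπ : Irreducible π := by
    have hm1 : m = 1 := by omega
    rw [hm1, pow_one] at hv
    exact (Associated.irreducible ⟨v, (mul_comm (ϖF) (v : O_F)) ▸ hv.symm⟩ hϖF : _)
  -- squares are surjective modulo the maximal ideal
  have hsq : ∀ cf : O_F, ∃ s : O_F, cf - s ^ 2 ∈ maximalIdeal O_F := by
    set k := ResidueField O_F with hk
    set res : O_F →+* k := residue O_F with hres
    have hressurj : Function.Surjective res := Ideal.Quotient.mk_surjective
    have h2res : res (2 : O_F) = 0 := Ideal.Quotient.eq_zero_iff_mem.mpr h2F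
    have h2k : (2 : k) = 0 := by rw [← map_ofNat res 2]; exact h2res
    obtain ⟨nn, f, hf⟩ := Module.Finite.exists_fin' ℤ_[2] O_F
    have hg : Function.Surjective
        (fun vv : Fin nn → ZMod 2 => res (f (fun i => ((vv i).cast : ℤ_[2])))) := by
      intro y
      obtain ⟨x, hx⟩ := hressurj y
      obtain ⟨zz, hz⟩ := hf x
      have hdv : ∀ i, ∃ wi : ℤ_[2], zz i - ((PadicInt.toZMod (zz i)).cast : ℤ_[2]) = 2 * wi := by
        intro i
        have hsp := PadicInt.toZMod_spec (zz i)
        rw [PadicInt.maximalIdeal_eq_span_p, Ideal.mem_span_singleton] at hsp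
        obtain ⟨wi, hwi⟩ := hsp
        exact ⟨wi, by rw [hwi]; norm_num⟩
      choose ww hww using hdv
      refine ⟨fun i => PadicInt.toZMod (zz i), ?_⟩
      show res (f fun i => ((PadicInt.toZMod (zz i)).cast : ℤ_[2])) = y
      have hzz : f (fun i => ((PadicInt.toZMod (zz i)).cast : ℤ_[2])) = x - (2:O_F) * f ww := by
        have hfun : (fun i => ((PadicInt.toZMod (zz i)).cast : ℤ_[2]))
            = zz - (2 : ℤ_[2]) • ww := by
          funext i
          simp only [Pi.sub_apply, Pi.smul_apply, smul_eq_mul]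
          linear_combination - hww i
        rw [hfun, map_sub, map_smul, hz, Algebra.smul_def, map_ofNat]
      rw [hzz, map_sub, map_mul, hx, h2res, zero_mul, sub_zero]
    have hkfin : Finite k := Finite.of_surjective _ hg
    have hfrobinj : Function.Injective (fun a : k => a * a) := by
      intro a b hab
      simp only at hab
      have hzero : (a - b) * (a - b) = 0 := by
        have expand : (a - b) * (a - b) = 2 * (b * b - a * b) := by linear_combination hab
        rw [expand, h2k, zero_mul]
      exact sub_eq_zero.mp (mul_self_eq_zero.mp hzero)
    have hfrobsurj : Function.Surjective (fun a : k => a * a) :=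
      Finite.injective_iff_surjective.mp hfrobinj
    intro cf
    obtain ⟨a, ha⟩ := hfrobsurj (res cf)
    obtain ⟨s, hs⟩ := hressurj a
    refine ⟨s, ?_⟩
    rw [← Ideal.Quotient.eq_zero_iff_mem]
    show res (cf - s ^ 2) = 0
    have ha' : a * a = res cf := ha
    rw [map_sub, map_pow, hs, pow_two, ha', sub_self]
  -- the ℤ₂-span of the norms
  set S : Submodule ℤ_[2] O_F := Submodule.span ℤ_[2] (Set.range nm) with hS
  set M : Ideal O_F := maximalIdeal O_F with hMdef
  have hMπ : M = Ideal.span {π} := hπ.maximalIdeal_eq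
  have hstep : ∀ n : ℕ, ∀ w : O_F,
      w ∈ S ⊔ Submodule.restrictScalars ℤ_[2] (M ^ n) := by
    intro n
    induction n with
    | zero =>
      intro w
      apply Submodule.mem_sup_right
      rw [pow_zero, Ideal.one_eq_top]
      exact Submodule.mem_top
    | succ n ih =>
      intro w
      obtain ⟨a, ha, b, hb, rfl⟩ := Submodule.mem_sup.mp (ih w)
      have hb' : b ∈ M ^ n := hb
      rw [hMπ, Ideal.span_singleton_pow, Ideal.mem_span_singleton] at hb'
      obtain ⟨cc, hcc⟩ := hb'
      obtain ⟨s, hs⟩ := hsq cc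
      have hbsplit : b = nm (algebraMap O_F O_E s * ϖE ^ n) + π ^ n * (cc - s ^ 2) := by
        rw [hnm_mul, hnm_sq, hnm_pow, ← hπdef, hcc]; ring
      have h1 : nm (algebraMap O_F O_E s * ϖE ^ n) ∈ S :=
        Submodule.subset_span ⟨_, rfl⟩
      have h2 : π ^ n * (cc - s ^ 2) ∈ M ^ (n + 1) := by
        rw [hMπ, Ideal.span_singleton_pow, Ideal.mem_span_singleton]
        obtain ⟨t, ht⟩ : π ∣ (cc - s ^ 2) := by
          rw [← Ideal.mem_span_singleton, ← hMπ]; exact hs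
        exact ⟨t, by rw [ht, pow_succ]; ring⟩
      rw [hbsplit, ← add_assoc]
      exact Submodule.add_mem_sup (Submodule.add_mem _ ha h1) h2
  obtain ⟨n0, hn0⟩ := IsDiscreteValuationRing.ideal_eq_span_pow_irreducible
      (fun h => h20F (Ideal.span_singleton_eq_bot.mp h)) hπ
  have h2M : M ^ n0 = Ideal.span {(2 : O_F)} := by
    rw [hn0, hMπ, Ideal.span_singleton_pow]
  -- membership in S gives the conclusion
  have hSprop : ∀ a : O_F, a ∈ S → ∃ z : ℤ_[2], algebraMap ℤ_[2] ℚ_[2] z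
      = Algebra.trace ℚ_[2] F (d * algebraMap O_F F a) := by
    intro a haS
    induction haS using Submodule.span_induction with
    | mem x hx =>
      obtain ⟨xe, rfl⟩ := hx
      obtain ⟨z, hz⟩ := htr xe
      exact ⟨z, by rw [hnm xe]; exact hz⟩
    | zero => exact ⟨0, by rw [map_zero, map_zero, mul_zero, map_zero]⟩
    | add x y hx hy ihx ihy =>
      obtain ⟨za, hza⟩ := ihx
      obtain ⟨zb, hzb⟩ := ihy
      exact ⟨za + zb, by rw [map_add, map_add, mul_add, map_add, hza, hzb]⟩
    | smul z x hx ihx =>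
      obtain ⟨za, hza⟩ := ihx
      refine ⟨z * za, ?_⟩
      have hmapsm : d * algebraMap O_F F (z • x)
          = (algebraMap ℤ_[2] ℚ_[2] z) • (d * algebraMap O_F F x) := by
        rw [Algebra.smul_def, map_mul, ← IsScalarTower.algebraMap_apply ℤ_[2] O_F F,
          IsScalarTower.algebraMap_apply ℤ_[2] ℚ_[2] F, Algebra.smul_def]
        ring
      rw [hmapsm, map_smul, smul_eq_mul, ← hza, ← map_mul]
  -- elements divisible by 2 also give the conclusion
  have h2prop : ∀ t : O_F, ∃ z : ℤ_[2], algebraMap ℤ_[2] ℚ_[2] z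
      = Algebra.trace ℚ_[2] F (d * algebraMap O_F F (2 * t)) := by
    intro t
    obtain ⟨z1, hz1⟩ := htr (algebraMap O_F O_E (t + 1))
    obtain ⟨z2, hz2⟩ := htr (algebraMap O_F O_E t)
    obtain ⟨z3, hz3⟩ := htr 1
    refine ⟨z1 - z2 - z3, ?_⟩
    have hnorm : ∀ v : O_F, Algebra.norm F (algebraMap O_E E (algebraMap O_F O_E v))
        = (algebraMap O_F F v) ^ 2 := fun v => by
      rw [hEmap, Algebra.norm_algebraMap, hquad]
    rw [hnorm] at hz1 hz2
    have hone : Algebra.norm F (algebraMap O_E E (1 : O_E)) = 1 := by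
      rw [map_one, map_one]
    rw [hone] at hz3
    have hexp : d * algebraMap O_F F (2 * t)
        = d * (algebraMap O_F F (t + 1)) ^ 2 - d * (algebraMap O_F F t) ^ 2 - d * 1 := by
      rw [map_mul, map_add, map_one, map_ofNat]
      ring
    rw [mul_one] at hz3
    rw [hexp, mul_one, map_sub, map_sub, map_sub, map_sub, hz1, hz2, hz3]
  -- conclusion
  intro y
  have hy := hstep n0 y
  rw [h2M] at hy
  obtain ⟨a, ha, b, hb, hab⟩ := Submodule.mem_sup.mp hy
  have hb' : b ∈ Ideal.span {(2 : O_F)} := hb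
  obtain ⟨t, ht⟩ := Ideal.mem_span_singleton.mp hb'
  obtain ⟨z1, hz1⟩ := hSprop a ha
  obtain ⟨z2, hz2⟩ := h2prop t
  refine ⟨z1 + z2, ?_⟩
  have hsplit : d * algebraMap O_F F y = d * algebraMap O_F F a + d * algebraMap O_F F (2 * t) := by
    rw [← hab, ht, map_add, mul_add]
  rw [hsplit, map_add, map_add, hz1, hz2]
end
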